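/- For every n, if R and S are valid notions of n-estimators, then R ∩ S is a valid notion of n-estimators, and moreover for n > 0, ⋃(R ∩ S) = ⋃R ∩ ⋃S. -/

import Mathlib

/-- The type of level-`n` estimators: a 0-estimator is a pair of naturals,
and an `(n+1)`-estimator is a set (required to be finite by validity) of `n`-estimators. -/
def Est : ℕ → Type := fun n => Nat.rec (ℕ × ℕ) (fun _ ih => Set ih) n

/-- Validity of a notion of `n`-estimators (Definition 6.3). -/
def EstValid : (n : ℕ) → Set (Est n) → Prop := fun n =>
  Nat.rec (motive := fun n => Set (Est n) → Prop)
    (fun R => ∃ amin : ℕ, ∃ f : ℕ → ℕ, ∀ a b : ℕ,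
      ((a, b) : ℕ × ℕ) ∈ R ↔ amin ≤ a ∧ f a ≤ b)
    (fun n ih R =>
      (∀ x ∈ R, Set.Finite (show Set (Est n) from x)) ∧
      ih (⋃₀ (show Set (Set (Est n)) from R)) ∧
      (∀ x ∈ R, ∀ y ∈ ⋃₀ (show Set (Set (Est n)) from R),
        (show Set (Est n) from x) ∪ {y} ∈ R) ∧
      (∀ S : Set (Est n), ih S → ∃ r ∈ R, (show Set (Est n) from r) ⊆ S))
    n


lemma est_succ_iff (n : ℕ) (R : Set (Set (Est n))) :
    EstValid (n+1) R ↔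
      ((∀ x ∈ R, Set.Finite (show Set (Est n) from x)) ∧
      EstValid n (⋃₀ R) ∧
      (∀ x ∈ R, ∀ y ∈ ⋃₀ R, (show Set (Est n) from x) ∪ {y} ∈ R) ∧
      (∀ S : Set (Est n), EstValid n S → ∃ r ∈ R, (show Set (Est n) from r) ⊆ S)) :=
  Iff.rfl

lemma est_union_mem (n : ℕ) (R : Set (Set (Est n)))
    (hcl : ∀ x ∈ R, ∀ y ∈ ⋃₀ R, x ∪ {y} ∈ R)
    (x : Set (Est n)) (hx : x ∈ R) :
    ∀ t : Set (Est n), t.Finite → t ⊆ ⋃₀ R → x ∪ t ∈ R := by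
  intro t ht
  refine Set.Finite.induction_on (motive := fun t _ => t ⊆ ⋃₀ R → x ∪ t ∈ R) t ht
    (fun _ => by simpa using hx) ?_
  intro a s _ hs ih hsub
  have h1 : x ∪ s ∈ R := ih (fun y hy => hsub (Set.mem_insert_of_mem _ hy))
  have h2 := hcl _ h1 a (hsub (Set.mem_insert _ _))
  have he : x ∪ insert a s = (x ∪ s) ∪ {a} := by
    ext z
    simp only [Set.mem_union, Set.mem_insert_iff, Set.mem_singleton_iff]
    tauto
  rwa [he]

lemma est_sUnion_inter (n : ℕ)
    (ihv : ∀ R S : Set (Est n), EstValid n R → EstValid n S → EstValid n (R ∩ S))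
    (R S : Set (Set (Est n)))
    (hR : EstValid (n+1) R) (hS : EstValid (n+1) S) :
    ⋃₀ (R ∩ S) = ⋃₀ R ∩ ⋃₀ S := by
  obtain ⟨hRfin, hRU, hRcl, hRmin⟩ := (est_succ_iff n R).mp hR
  obtain ⟨hSfin, hSU, hScl, hSmin⟩ := (est_succ_iff n S).mp hS
  have hUv : EstValid n (⋃₀ R ∩ ⋃₀ S) := ihv _ _ hRU hSU
  obtain ⟨r, hrR, hr⟩ := hRmin _ hUv
  obtain ⟨s, hsS, hs⟩ := hSmin _ hUv
  have hrsR : r ∪ s ∈ R :=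
    est_union_mem n R hRcl r hrR s (hSfin s hsS)
      (fun y hy => ((hs hy).1))
  have hrsS : r ∪ s ∈ S := by
    have : s ∪ r ∈ S :=
      est_union_mem n S hScl s hsS r (hRfin r hrR) (fun y hy => ((hr hy).2))
    rwa [Set.union_comm] at this
  apply subset_antisymm
  · rintro y ⟨x, ⟨hx1, hx2⟩, hyx⟩
    exact ⟨⟨x, hx1, hyx⟩, ⟨x, hx2, hyx⟩⟩
  · rintro y ⟨hy1, hy2⟩
    refine ⟨r ∪ s ∪ {y}, ⟨?_, ?_⟩, Or.inr rfl⟩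
    · exact hRcl _ hrsR y hy1
    · exact hScl _ hrsS y hy2

lemma est_inter_valid :
    ∀ n : ℕ, ∀ R S : Set (Est n), EstValid n R → EstValid n S → EstValid n (R ∩ S) := by
  intro n
  induction n with
  | zero =>
    rintro R S ⟨a1, f1, h1⟩ ⟨a2, f2, h2⟩
    refine ⟨max a1 a2, fun a => max (f1 a) (f2 a), fun a b => ?_⟩
    simp only [Set.mem_inter_iff, h1, h2, max_le_iff]
    exact ⟨fun ⟨hr, hs⟩ => ⟨⟨((h1 a b).1 hr).1, ((h2 a b).1 hs).1⟩, ((h1 a b).1 hr).2, ((h2 a b).1 hs).2⟩,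
      fun ⟨⟨ha1, ha2⟩, hb1, hb2⟩ => ⟨(h1 a b).2 ⟨ha1, hb1⟩, (h2 a b).2 ⟨ha2, hb2⟩⟩⟩
  | succ n ih =>
    intro R S hR hS
    have hU := est_sUnion_inter n ih R S hR hS
    obtain ⟨hRfin, hRU, hRcl, hRmin⟩ := (est_succ_iff n R).mp hR
    obtain ⟨hSfin, hSU, hScl, hSmin⟩ := (est_succ_iff n S).mp hS
    refine (est_succ_iff n (R ∩ S)).mpr ?_
    refine ⟨fun x hx => hRfin x hx.1, ?_, ?_, ?_⟩
    · rw [hU]; exact ih _ _ hRU hSU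
    · intro x hx y hy
      rw [hU] at hy
      exact ⟨hRcl x hx.1 y hy.1, hScl x hx.2 y hy.2⟩
    · intro S' hS'
      have hTv : EstValid n (S' ∩ (⋃₀ R ∩ ⋃₀ S)) := ih _ _ hS' (ih _ _ hRU hSU)
      obtain ⟨r, hrR, hr⟩ := hRmin _ hTv
      obtain ⟨s, hsS, hs⟩ := hSmin _ hTv
      refine ⟨r ∪ s, ⟨?_, ?_⟩, Set.union_subset (fun y hy => (hr hy).1) (fun y hy => (hs hy).1)⟩
      · exact est_union_mem n R hRcl r hrR s (hSfin s hsS) (fun y hy => (hs hy).2.1)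
      · have : s ∪ r ∈ S :=
          est_union_mem n S hScl s hsS r (hRfin r hrR) (fun y hy => (hr hy).2.2)
        rwa [Set.union_comm] at this

/-- Proposition 6.5(b): the intersection of two valid notions of `n`-estimators is valid,
and moreover for `n > 0` (i.e. at level `n+1`) the union of the intersection is the
intersection of the unions: `⋃₀(R ∩ S) = ⋃₀R ∩ ⋃₀S`. -/
theorem estValid_inter :
    (∀ n : ℕ, ∀ R S : Set (Est n), EstValid n R → EstValid n S → EstValid n (R ∩ S)) ∧
    (∀ n : ℕ, ∀ R S : Set (Est (n + 1)), EstValid (n + 1) R → EstValid (n + 1) S →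
      ⋃₀ (show Set (Set (Est n)) from R ∩ S) =
        ⋃₀ (show Set (Set (Est n)) from R) ∩ ⋃₀ (show Set (Set (Est n)) from S)) :=
  ⟨est_inter_valid, fun n R S hR hS => est_sUnion_inter n (est_inter_valid n) R S hR hS⟩
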